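/- Let F satisfy Assumption 2, let a > 0 and b ∈ ℝ, and set b₊ = max(b, 0). If y₁, y₂ : [0,∞) → ℝ are differentiable functions satisfying yᵢ'(x) = −a·x² + b + F(yᵢ(x)) for all x ≥ 0 and yᵢ(x) ≥ 0 for every x ≥ √(b₊/a) (i = 1, 2), then y₁ = y₂ on [0,∞). -/

import Mathlib

/-- Assumption 2 on the function `F`. -/
structure Assumption2 (F : ℝ → ℝ) : Prop where
  convex : ConvexOn ℝ Set.univ F
  diff : Differentiable ℝ F
  even : ∀ x : ℝ, F (-x) = F x
  strictMonoOn : StrictMonoOn F (Set.Ici 0)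
  map_zero : F 0 = 0
  deriv_diffOn : ∀ x ∈ Set.Ici (0 : ℝ), DifferentiableAt ℝ (deriv F) x
  deriv_strictMonoOn : StrictMonoOn (deriv F) (Set.Ici 0)
  deriv_zero : deriv F 0 = 0
  growth : ∃ K > (0 : ℝ), ∃ p : ℝ, 2 ≤ p ∧ ∀ x : ℝ, F x ≤ K * (1 + |x| ^ p)
  second_deriv_lb : ∃ C > (0 : ℝ), ∃ x₀ > (0 : ℝ), ∀ x : ℝ, x₀ < |x| → C < deriv (deriv F) x

section Helpers

open Set

/-- Monotonicity on `Ici m` from a pointwise derivative lower bound. -/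
lemma monoOn_Ici_of_hasDerivAt {f g : ℝ → ℝ} {m : ℝ}
    (hf : ∀ x ∈ Ici m, HasDerivAt f (g x) x) (hg : ∀ x ∈ Ici m, 0 ≤ g x) :
    MonotoneOn f (Ici m) := by
  apply monotoneOn_of_deriv_nonneg (convex_Ici m)
    (fun x hx => (hf x hx).continuousAt.continuousWithinAt)
  · rw [interior_Ici]
    exact fun x hx => (hf x (mem_Ici.mpr (le_of_lt (mem_Ioi.mp hx)))).differentiableAt.differentiableWithinAt
  · rw [interior_Ici]
    intro x hx
    rw [(hf x (mem_Ici.mpr (le_of_lt (mem_Ioi.mp hx)))).deriv]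
    exact hg x (mem_Ici.mpr (le_of_lt (mem_Ioi.mp hx)))

lemma antiOn_Ici_of_hasDerivAt {f g : ℝ → ℝ} {m : ℝ}
    (hf : ∀ x ∈ Ici m, HasDerivAt f (g x) x) (hg : ∀ x ∈ Ici m, g x ≤ 0) :
    AntitoneOn f (Ici m) := by
  apply antitoneOn_of_deriv_nonpos (convex_Ici m)
    (fun x hx => (hf x hx).continuousAt.continuousWithinAt)
  · rw [interior_Ici]
    exact fun x hx => (hf x (mem_Ici.mpr (le_of_lt (mem_Ioi.mp hx)))).differentiableAt.differentiableWithinAt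
  · rw [interior_Ici]
    intro x hx
    rw [(hf x (mem_Ici.mpr (le_of_lt (mem_Ioi.mp hx)))).deriv]
    exact hg x (mem_Ici.mpr (le_of_lt (mem_Ioi.mp hx)))

variable {F : ℝ → ℝ}

lemma Assumption2.deriv_mono (hF : Assumption2 F) : Monotone (deriv F) :=
  monotoneOn_univ.mp <| hF.convex.monotoneOn_deriv (fun x _ => hF.diff x)

lemma Assumption2.deriv_nonneg (hF : Assumption2 F) {t : ℝ} (ht : 0 ≤ t) :
    0 ≤ deriv F t := hF.deriv_zero ▸ hF.deriv_mono ht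

lemma Assumption2.deriv_odd (hF : Assumption2 F) (x : ℝ) :
    deriv F (-x) = -deriv F x := by
  have hfun : (fun y : ℝ => F (-y)) = F := funext hF.even
  have h1 : deriv (fun y : ℝ => F (-y)) x = -deriv F (-x) := deriv_comp_neg F x
  rw [hfun] at h1
  linarith

lemma Assumption2.nonneg (hF : Assumption2 F) {t : ℝ} (ht : 0 ≤ t) : 0 ≤ F t := by
  rcases eq_or_lt_of_le ht with rfl | ht'
  · exact le_of_eq hF.map_zero.symm
  · exact le_of_lt (hF.map_zero ▸ hF.strictMonoOn (mem_Ici.mpr le_rfl) (mem_Ici.mpr (le_of_lt ht')) ht')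

/-- `F` is Lipschitz on `[-R, R]` with constant `deriv F R`. -/
lemma Assumption2.lipschitzOn (hF : Assumption2 F) {R : ℝ} (hR : 0 ≤ R) :
    LipschitzOnWith (deriv F R).toNNReal F (Icc (-R) R) := by
  apply Convex.lipschitzOnWith_of_nnnorm_hasDerivWithin_le (f' := deriv F) (convex_Icc _ _)
    (fun x _ => (hF.diff x).hasDerivAt.hasDerivWithinAt)
  intro x hx
  rw [← NNReal.coe_le_coe]
  have h0 : (0:ℝ) ≤ deriv F R := hF.deriv_nonneg hR
  have h1 : deriv F x ≤ deriv F R := hF.deriv_mono hx.2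
  have h2 : -deriv F R ≤ deriv F x := by
    have hxR : -x ≤ R := by linarith [hx.1]
    have := hF.deriv_mono hxR
    rw [hF.deriv_odd] at this
    linarith
  simp only [coe_nnnorm, Real.norm_eq_abs, Real.coe_toNNReal _ h0]
  rw [abs_le]
  exact ⟨h2, h1⟩

/-- Convexity gives `F s + F t ≤ F (s + t)` for nonnegative `s, t` (superadditivity). -/
lemma Assumption2.incr (hF : Assumption2 F) {s t : ℝ} (hs : 0 ≤ s) (ht : 0 ≤ t) :
    F t ≤ F (s + t) - F s := by
  have hG : ∀ u ∈ Ici (0:ℝ), HasDerivAt (fun u => F (u + t) - F u)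
      (deriv F (u + t) - deriv F u) u := by
    intro u _
    have h1 : HasDerivAt (fun u => F (u + t)) (deriv F (u + t)) u := by
      simpa [Function.comp_def] using (hF.diff (u + t)).hasDerivAt.comp u
        ((hasDerivAt_id u).add_const t)
    exact h1.sub (hF.diff u).hasDerivAt
  have hmono : MonotoneOn (fun u => F (u + t) - F u) (Ici (0:ℝ)) := by
    apply monoOn_Ici_of_hasDerivAt hG
    intro u _
    have : deriv F u ≤ deriv F (u + t) := hF.deriv_mono (by linarith)
    linarith
  have := hmono (self_mem_Ici) hs hs
  simpa [hF.map_zero] using this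

/-- Quadratic lower bound for `F` beyond `x₀`. -/
lemma Assumption2.quad_lb (hF : Assumption2 F) {C x₀ : ℝ} (hC : 0 < C) (hx₀ : 0 < x₀)
    (hlb : ∀ x : ℝ, x₀ < |x| → C < deriv (deriv F) x) {t : ℝ} (ht : x₀ ≤ t) :
    C / 2 * (t - x₀) ^ 2 ≤ F t := by
  -- first, deriv F t ≥ C (t - x₀) on Ici x₀
  have hd : ∀ u ∈ Ici x₀, C * (u - x₀) ≤ deriv F u := by
    have hψ : ∀ u ∈ Ici x₀, HasDerivAt (fun u => deriv F u - C * u)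
        (deriv (deriv F) u - C) u := by
      intro u hu
      have h2 : HasDerivAt (fun u : ℝ => C * u) C u := by
        simpa using (hasDerivAt_id u).const_mul C
      exact ((hF.deriv_diffOn u (le_trans (le_of_lt hx₀) hu)).hasDerivAt).sub h2
    have hmono : MonotoneOn (fun u => deriv F u - C * u) (Ici x₀) := by
      apply monotoneOn_of_deriv_nonneg (convex_Ici x₀)
        (fun u hu => ((hψ u hu).continuousAt.continuousWithinAt))
      · rw [interior_Ici]
        exact fun u hu => (hψ u (mem_Ici.mpr (le_of_lt (mem_Ioi.mp hu)))).differentiableAt.differentiableWithinAt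
      · rw [interior_Ici]
        intro u hu
        rw [(hψ u (mem_Ici.mpr (le_of_lt (mem_Ioi.mp hu)))).deriv]
        have : C < deriv (deriv F) u := hlb u (by rw [abs_of_pos (lt_trans hx₀ (mem_Ioi.mp hu))]; exact hu)
        linarith
    intro u hu
    have := hmono self_mem_Ici hu hu
    have h0 : 0 ≤ deriv F x₀ := hF.deriv_nonneg (le_of_lt hx₀)
    simp only at this
    nlinarith
  -- now integrate once more
  have hφ : ∀ u ∈ Ici x₀, HasDerivAt (fun u => F u - C / 2 * (u - x₀) ^ 2)
      (deriv F u - C * (u - x₀)) u := by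
    intro u _
    have h2 : HasDerivAt (fun u : ℝ => C / 2 * (u - x₀) ^ 2) (C * (u - x₀)) u := by
      have : HasDerivAt (fun u : ℝ => (u - x₀) ^ 2) (2 * (u - x₀)) u := by
        simpa using ((hasDerivAt_id u).sub_const x₀).fun_pow 2
      have := this.const_mul (C / 2)
      rw [show C * (u - x₀) = C / 2 * (2 * (u - x₀)) by ring]
      exact this
    exact (hF.diff u).hasDerivAt.sub h2
  have hmono : MonotoneOn (fun u => F u - C / 2 * (u - x₀) ^ 2) (Ici x₀) :=
    monoOn_Ici_of_hasDerivAt hφ (fun u hu => by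
      have := hd u hu; simp only [sub_nonneg]; linarith)
  have h := hmono self_mem_Ici ht ht
  have h0 : 0 ≤ F x₀ := hF.nonneg (le_of_lt hx₀)
  simp only [sub_self] at h
  nlinarith

end Helpers

section Uniq

open Set

/-- Forward/backward ODE uniqueness: if two solutions agree somewhere, they agree everywhere. -/
lemma uniq_of_eq (F : ℝ → ℝ) (hF : Assumption2 F) (a b : ℝ)
    (y₁ y₂ : ℝ → ℝ)
    (h₁ : ∀ x : ℝ, 0 ≤ x →
      HasDerivWithinAt y₁ (-a * x ^ 2 + b + F (y₁ x)) (Set.Ici 0) x)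
    (h₂ : ∀ x : ℝ, 0 ≤ x →
      HasDerivWithinAt y₂ (-a * x ^ 2 + b + F (y₂ x)) (Set.Ici 0) x)
    {c : ℝ} (hc : 0 ≤ c) (heq : y₁ c = y₂ c) :
    ∀ x : ℝ, 0 ≤ x → y₁ x = y₂ x := by
  intro x hx
  set T : ℝ := max c x with hT
  have hcT : c ≤ T := le_max_left _ _
  have hxT : x ≤ T := le_max_right _ _
  have hsub : Icc (0:ℝ) T ⊆ Ici 0 := fun t ht => ht.1
  have cont1 : ContinuousOn y₁ (Icc 0 T) :=
    fun t ht => ((h₁ t ht.1).continuousWithinAt).mono hsub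
  have cont2 : ContinuousOn y₂ (Icc 0 T) :=
    fun t ht => ((h₂ t ht.1).continuousWithinAt).mono hsub
  obtain ⟨R₁, hR₁⟩ := IsCompact.exists_bound_of_continuousOn isCompact_Icc cont1
  obtain ⟨R₂, hR₂⟩ := IsCompact.exists_bound_of_continuousOn isCompact_Icc cont2
  set R : ℝ := max R₁ R₂ with hRdef
  have hR : 0 ≤ R := by
    have := hR₁ 0 ⟨le_rfl, le_trans hc hcT⟩
    have h0 : (0:ℝ) ≤ ‖y₁ 0‖ := norm_nonneg _
    exact le_trans h0 (le_trans this (le_max_left _ _))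
  have hmem1 : ∀ t ∈ Icc (0:ℝ) T, y₁ t ∈ Icc (-R) R := by
    intro t ht
    have := hR₁ t ht
    rw [Real.norm_eq_abs, abs_le] at this
    exact ⟨le_trans (neg_le_neg (le_max_left R₁ R₂)) this.1,
      le_trans this.2 (le_max_left R₁ R₂)⟩
  have hmem2 : ∀ t ∈ Icc (0:ℝ) T, y₂ t ∈ Icc (-R) R := by
    intro t ht
    have := hR₂ t ht
    rw [Real.norm_eq_abs, abs_le] at this
    exact ⟨le_trans (neg_le_neg (le_max_right R₁ R₂)) this.1,
      le_trans this.2 (le_max_right R₁ R₂)⟩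
  set v : ℝ → ℝ → ℝ := fun t y => -a * t ^ 2 + b + F y with hv_def
  have hv : ∀ t : ℝ, LipschitzOnWith (deriv F R).toNNReal (v t) (Icc (-R) R) := by
    intro t
    intro u hu z hz
    have := hF.lipschitzOn hR hu hz
    simpa [hv_def, edist_dist, dist_add_left, add_assoc] using this
  rcases le_or_gt c x with hcx | hxc
  · -- forward uniqueness on Icc c T
    have := ODE_solution_unique_of_mem_Icc_right (fun t _ => hv t)
      (cont1.mono (Icc_subset_Icc_left hc))
      (fun t ht => (h₁ t (le_trans hc ht.1)).mono (Ici_subset_Ici.2 (le_trans hc ht.1)))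
      (fun t ht => hmem1 t ⟨le_trans hc ht.1, le_of_lt ht.2⟩)
      (cont2.mono (Icc_subset_Icc_left hc))
      (fun t ht => (h₂ t (le_trans hc ht.1)).mono (Ici_subset_Ici.2 (le_trans hc ht.1)))
      (fun t ht => hmem2 t ⟨le_trans hc ht.1, le_of_lt ht.2⟩)
      heq
    exact this ⟨hcx, hxT⟩
  · -- backward uniqueness on Icc x c
    have hder : ∀ (y : ℝ → ℝ), (∀ s : ℝ, 0 ≤ s →
        HasDerivWithinAt y (-a * s ^ 2 + b + F (y s)) (Set.Ici 0) s) →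
        ∀ t ∈ Ioc x c, HasDerivWithinAt y (v t (y t)) (Iic t) t := by
      intro y hy t ht
      have htpos : 0 < t := lt_of_le_of_lt hx ht.1
      exact ((hy t (le_of_lt htpos)).hasDerivAt (Ici_mem_nhds htpos)).hasDerivWithinAt
    have hIcc : Icc x c ⊆ Icc (0:ℝ) T := Icc_subset_Icc hx hcT
    have := ODE_solution_unique_of_mem_Icc_left (fun t _ => hv t)
      (cont1.mono hIcc)
      (hder y₁ h₁)
      (fun t ht => hmem1 t (hIcc ⟨le_of_lt ht.1, ht.2⟩))
      (cont2.mono hIcc)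
      (hder y₂ h₂)
      (fun t ht => hmem2 t (hIcc ⟨le_of_lt ht.1, ht.2⟩))
      heq
    exact this ⟨le_rfl, le_of_lt hxc⟩

end Uniq

section Blowup

open Set

/-- The core contradiction: two ordered solutions force finite-time blow-up of their
difference, which is impossible for globally defined solutions. -/
lemma blowup (F : ℝ → ℝ) (hF : Assumption2 F) (a b : ℝ) (ha : 0 < a)
    (y₁ y₂ : ℝ → ℝ)
    (h₁ : ∀ x : ℝ, 0 ≤ x →
      HasDerivWithinAt y₁ (-a * x ^ 2 + b + F (y₁ x)) (Set.Ici 0) x)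
    (h₂ : ∀ x : ℝ, 0 ≤ x →
      HasDerivWithinAt y₂ (-a * x ^ 2 + b + F (y₂ x)) (Set.Ici 0) x)
    (h₂pos : ∀ x : ℝ, Real.sqrt (max b 0 / a) ≤ x → 0 ≤ y₂ x)
    (hgt : ∀ x : ℝ, 0 ≤ x → y₂ x < y₁ x) : False := by
  obtain ⟨C, hC, x₀, hx₀, hlb⟩ := hF.second_deriv_lb
  set x₁ : ℝ := Real.sqrt (max b 0 / a) with hx₁def
  have hx₁ : 0 ≤ x₁ := Real.sqrt_nonneg _
  set m : ℝ := x₁ + 1 with hmdef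
  have hm0 : 0 < m := by linarith
  have hm1 : x₁ ≤ m := by linarith
  set w : ℝ → ℝ := fun x => y₁ x - y₂ x with hwdef
  have hw : ∀ x ∈ Ici m, HasDerivAt w (F (y₁ x) - F (y₂ x)) x := by
    intro x hx
    have hxpos : 0 < x := lt_of_lt_of_le hm0 hx
    have d1 := (h₁ x hxpos.le).hasDerivAt (Ici_mem_nhds hxpos)
    have d2 := (h₂ x hxpos.le).hasDerivAt (Ici_mem_nhds hxpos)
    have := d1.sub d2
    rw [show F (y₁ x) - F (y₂ x) = (-a * x ^ 2 + b + F (y₁ x)) - (-a * x ^ 2 + b + F (y₂ x)) by ring]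
    exact this
  have hwpos : ∀ x ∈ Ici m, 0 < w x := by
    intro x hx
    have : y₂ x < y₁ x := hgt x (le_trans hm0.le hx)
    simp only [hwdef]
    linarith
  have hwge : ∀ x ∈ Ici m, F (w x) ≤ F (y₁ x) - F (y₂ x) := by
    intro x hx
    have hy2 : 0 ≤ y₂ x := h₂pos x (le_trans hm1 hx)
    have hwx : 0 ≤ w x := (hwpos x hx).le
    have := hF.incr hy2 hwx
    have hsum : y₂ x + w x = y₁ x := by simp only [hwdef]; ring
    rwa [hsum] at this
  have hFw0 : ∀ x ∈ Ici m, 0 ≤ F (w x) := fun x hx => hF.nonneg (hwpos x hx).le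
  have hwmono : MonotoneOn w (Ici m) :=
    monoOn_Ici_of_hasDerivAt hw (fun x hx => le_trans (hFw0 x hx) (hwge x hx))
  set δ : ℝ := w m with hδdef
  have hδ : 0 < δ := hwpos m self_mem_Ici
  have hwδ : ∀ x ∈ Ici m, δ ≤ w x := fun x hx => hwmono self_mem_Ici hx hx
  set ε : ℝ := F δ with hεdef
  have hε : 0 < ε := by
    have := hF.strictMonoOn (self_mem_Ici) (mem_Ici.mpr hδ.le) hδ
    rwa [hF.map_zero] at this
  have hFw : ∀ x ∈ Ici m, ε ≤ F (w x) := by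
    intro x hx
    exact hF.strictMonoOn.monotoneOn (mem_Ici.mpr hδ.le)
      (mem_Ici.mpr (hwpos x hx).le) (hwδ x hx)
  -- linear growth of w
  have hu : MonotoneOn (fun x => w x - ε * x) (Ici m) := by
    apply monoOn_Ici_of_hasDerivAt (g := fun x => (F (y₁ x) - F (y₂ x)) - ε)
    · intro x hx
      have hc : HasDerivAt (fun x : ℝ => ε * x) ε x := by
        simpa using (hasDerivAt_id x).const_mul ε
      exact (hw x hx).sub hc
    · intro x hx
      have := hwge x hx
      have := hFw x hx
      linarith
  set x₂ : ℝ := m + (x₀ + 1) / ε with hx₂def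
  have hx₂m : m ≤ x₂ := by
    have : 0 ≤ (x₀ + 1) / ε := by positivity
    rw [hx₂def]
    linarith
  have hwx₂ : x₀ + 1 ≤ w x₂ := by
    have := hu self_mem_Ici (mem_Ici.mpr hx₂m) hx₂m
    simp only at this
    have hcalc : ε * x₂ = ε * m + (x₀ + 1) := by
      rw [hx₂def]
      field_simp
    have hδw : δ ≤ w m := le_of_eq hδdef
    nlinarith [hwδ m self_mem_Ici]
  have hwbig : ∀ x ∈ Ici x₂, x₀ + 1 ≤ w x := by
    intro x hx
    exact le_trans hwx₂ (hwmono (mem_Ici.mpr hx₂m)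
      (mem_Ici.mpr (le_trans hx₂m hx)) hx)
  -- quadratic differential inequality ⇒ blow-up
  set φ : ℝ → ℝ := fun x => (w x - x₀)⁻¹ + C / 2 * x with hφdef
  have hφder : ∀ x ∈ Ici x₂, HasDerivAt φ
      (-(F (y₁ x) - F (y₂ x)) / (w x - x₀) ^ 2 + C / 2) x := by
    intro x hx
    have hxm : x ∈ Ici m := mem_Ici.mpr (le_trans hx₂m hx)
    have hne : w x - x₀ ≠ 0 := by
      have := hwbig x hx
      intro h
      nlinarith
    have hinv : HasDerivAt (fun x => (w x - x₀)⁻¹)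
        (-(F (y₁ x) - F (y₂ x)) / (w x - x₀) ^ 2) x :=
      ((hw x hxm).sub_const x₀).inv hne
    have hlin : HasDerivAt (fun x : ℝ => C / 2 * x) (C / 2) x := by
      simpa using (hasDerivAt_id x).const_mul (C / 2)
    exact hinv.add hlin
  have hφanti : AntitoneOn φ (Ici x₂) := by
    apply antiOn_Ici_of_hasDerivAt hφder
    intro x hx
    have hxm : x ∈ Ici m := mem_Ici.mpr (le_trans hx₂m hx)
    have h1 : x₀ + 1 ≤ w x := hwbig x hx
    have h2 : C / 2 * (w x - x₀) ^ 2 ≤ F (w x) :=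
      hF.quad_lb hC hx₀ hlb (by linarith)
    have h3 : F (w x) ≤ F (y₁ x) - F (y₂ x) := hwge x hxm
    have hpos : 0 < (w x - x₀) ^ 2 := by nlinarith
    have hkey : C / 2 ≤ (F (y₁ x) - F (y₂ x)) / (w x - x₀) ^ 2 := by
      rw [le_div_iff₀ hpos]
      nlinarith
    have hng : -(F (y₁ x) - F (y₂ x)) / (w x - x₀) ^ 2
        = -((F (y₁ x) - F (y₂ x)) / (w x - x₀) ^ 2) := by ring
    rw [hng]
    linarith
  set x₃ : ℝ := x₂ + 4 / C with hx₃def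
  have hx₃ : x₂ ≤ x₃ := by
    have : 0 < 4 / C := by positivity
    rw [hx₃def]
    linarith
  have hfinal := hφanti self_mem_Ici (mem_Ici.mpr hx₃) hx₃
  simp only [hφdef] at hfinal
  have i1 : (w x₂ - x₀)⁻¹ ≤ 1 := by
    apply inv_le_one_of_one_le₀
    have := hwx₂
    linarith
  have i2 : 0 ≤ (w x₃ - x₀)⁻¹ := by
    have h := hwbig x₃ (mem_Ici.mpr hx₃)
    have : (0:ℝ) < w x₃ - x₀ := by linarith
    exact inv_nonneg.mpr this.le
  have i3 : C / 2 * x₃ = C / 2 * x₂ + 2 := by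
    rw [hx₃def]
    field_simp
    ring
  linarith

end Blowup

theorem stmt9 (F : ℝ → ℝ) (hF : Assumption2 F) (a b : ℝ) (ha : 0 < a)
    (y₁ y₂ : ℝ → ℝ)
    (h₁ : ∀ x : ℝ, 0 ≤ x →
      HasDerivWithinAt y₁ (-a * x ^ 2 + b + F (y₁ x)) (Set.Ici 0) x)
    (h₂ : ∀ x : ℝ, 0 ≤ x →
      HasDerivWithinAt y₂ (-a * x ^ 2 + b + F (y₂ x)) (Set.Ici 0) x)
    (h₁pos : ∀ x : ℝ, Real.sqrt (max b 0 / a) ≤ x → 0 ≤ y₁ x)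
    (h₂pos : ∀ x : ℝ, Real.sqrt (max b 0 / a) ≤ x → 0 ≤ y₂ x) :
    ∀ x : ℝ, 0 ≤ x → y₁ x = y₂ x := by
  intro x hx
  by_contra hne
  have key : ∀ t : ℝ, 0 ≤ t → y₁ t ≠ y₂ t := fun c hc hceq =>
    hne (uniq_of_eq F hF a b y₁ y₂ h₁ h₂ hc hceq x hx)
  have contw : ContinuousOn (fun t => y₁ t - y₂ t) (Set.Ici 0) := fun t ht =>
    ((h₁ t ht).continuousWithinAt).sub ((h₂ t ht).continuousWithinAt)
  have sign : ∀ s : ℝ, 0 ≤ s → ∀ t : ℝ, 0 ≤ t →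
      y₂ s < y₁ s → y₂ t < y₁ t := by
    intro s hs t ht hst
    by_contra hle
    push_neg at hle
    have hlt : y₁ t < y₂ t := lt_of_le_of_ne hle (key t ht)
    have hmem : (0:ℝ) ∈ Set.uIcc ((fun u => y₁ u - y₂ u) t) ((fun u => y₁ u - y₂ u) s) := by
      rw [Set.mem_uIcc]
      left
      constructor <;> simp only <;> linarith
    have hsubI : Set.uIcc t s ⊆ Set.Ici (0:ℝ) := by
      intro c hc
      rcases Set.mem_uIcc.mp hc with ⟨h1, _⟩ | ⟨h1, _⟩
      · exact le_trans ht h1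
      · exact le_trans hs h1
    obtain ⟨c, hc, hc0⟩ := intermediate_value_uIcc (contw.mono hsubI) hmem
    exact key c (hsubI hc) (sub_eq_zero.mp hc0)
  rcases (key x hx).lt_or_gt with hcase | hcase
  · -- y₁ x < y₂ x : swap roles
    apply blowup F hF a b ha y₂ y₁ h₂ h₁ h₁pos
    intro t ht
    by_contra hle
    push_neg at hle
    have h2 : y₂ t < y₁ t := lt_of_le_of_ne hle (key t ht).symm
    exact lt_asymm hcase (sign t ht x hx h2)
  · exact blowup F hF a b ha y₁ y₂ h₁ h₂ h₂pos
      (fun t ht => sign x hx t ht hcase)
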